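/- Let σ > 0 and let r be a random variable whose law is the Gaussian measure on ℝ with mean 0 and variance σ². Then the pushforward of the law of r under the map x ↦ log(x²) has density t ↦ f(t − log σ²) with respect to Lebesgue measure, where f is the log-χ²₁ density. In particular, writing η = log σ², the variable z = log r² has density t ↦ f(t − η). -/

import Mathlib

open MeasureTheory ProbabilityTheory Real
open scoped NNReal ENNReal

lemma my_lintegral_image {s : Set ℝ} {f f' : ℝ → ℝ}
    (hs : MeasurableSet s) (hf' : ∀ x ∈ s, HasDerivWithinAt f (f' x) s x)
    (hf : Set.InjOn f s) (g : ℝ → ℝ≥0∞) :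
    ∫⁻ x in f '' s, g x = ∫⁻ x in s, ENNReal.ofReal |f' x| * g (f x) := by
  simpa only [ContinuousLinearMap.det_toSpanSingleton] using
    MeasureTheory.lintegral_image_eq_lintegral_abs_det_fderiv_mul volume hs
      (fun x hx => (hf' x hx).hasFDerivWithinAt) hf g

lemma gaussian_map_log_sq (σ : ℝ≥0) (hσ : 0 < σ) :
    (gaussianReal 0 (σ ^ 2)).map (fun x => Real.log (x ^ 2)) =
      volume.withDensity
        (fun t => ENNReal.ofReal
          ((1 / Real.sqrt (2 * Real.pi)) *
            Real.exp (((t - Real.log ((σ : ℝ) ^ 2))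
              - Real.exp (t - Real.log ((σ : ℝ) ^ 2))) / 2))) := by
  have hσ0 : (0:ℝ) < (σ:ℝ) := hσ
  have hv : (σ ^ 2 : ℝ≥0) ≠ 0 := pow_ne_zero 2 hσ.ne'
  have hφ : Measurable fun x : ℝ => Real.log (x ^ 2) :=
    Real.measurable_log.comp (measurable_id.pow_const 2)
  ext s hs
  rw [Measure.map_apply hφ hs, withDensity_apply _ hs,
    ProbabilityTheory.gaussianReal_apply _ hv]
  set A : Set ℝ := (fun x : ℝ => Real.log (x ^ 2)) ⁻¹' s with hA
  -- drop the point 0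
  have hAzero : A =ᵐ[volume] A \ ({0} : Set ℝ) := by
    refine (MeasureTheory.diff_ae_eq_self.mpr ?_).symm
    exact measure_mono_null Set.inter_subset_right (volume_singleton)
  rw [setLIntegral_congr hAzero]
  have hdecomp : A \ {0} = ((fun t => Real.exp (t/2)) '' s) ∪ ((fun t => -Real.exp (t/2)) '' s) := by
    ext x
    simp only [Set.mem_diff, Set.mem_singleton_iff, Set.mem_union, Set.mem_image,
      Set.mem_preimage, hA]
    constructor
    · rintro ⟨hxs, hx0⟩
      rcases lt_or_gt_of_ne hx0 with hx | hx
      · refine Or.inr ⟨Real.log (x ^ 2), hxs, ?_⟩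
        have hx2 : Real.log (x ^ 2) = 2 * Real.log (-x) := by
          rw [show x ^ 2 = (-x) ^ 2 by ring, Real.log_pow]; push_cast; ring
        rw [hx2]
        rw [show 2 * Real.log (-x) / 2 = Real.log (-x) by ring, Real.exp_log (by linarith)]
        ring
      · refine Or.inl ⟨Real.log (x ^ 2), hxs, ?_⟩
        have hx2 : Real.log (x ^ 2) = 2 * Real.log x := by
          rw [Real.log_pow]; push_cast; ring
        rw [hx2, show 2 * Real.log x / 2 = Real.log x by ring, Real.exp_log hx]
    · rintro (⟨t, hts, rfl⟩ | ⟨t, hts, rfl⟩)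
      · constructor
        · have : Real.exp (t/2) ^ 2 = Real.exp t := by
            rw [sq, ← Real.exp_add]; ring_nf
          rwa [this, Real.log_exp]
        · exact (Real.exp_pos _).ne'
      · constructor
        · have : (-Real.exp (t/2)) ^ 2 = Real.exp t := by
            rw [neg_sq, sq, ← Real.exp_add]; ring_nf
          rwa [this, Real.log_exp]
        · simpa using (Real.exp_pos (t/2)).ne'
  erw [hdecomp]
  -- derivatives
  have hderiv : ∀ t : ℝ, HasDerivAt (fun t => Real.exp (t/2)) (Real.exp (t/2) * (1/2)) t := by
    intro t
    exact (Real.hasDerivAt_exp (t/2)).comp t ((hasDerivAt_id t).div_const 2)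
  have hinj : Function.Injective fun t : ℝ => Real.exp (t/2) := by
    intro a b h
    have := Real.exp_injective h
    linarith
  have hinj2 : Function.Injective fun t : ℝ => -Real.exp (t/2) := fun a b h =>
    hinj (by simpa using neg_injective h)
  have hdisj : Disjoint ((fun t => Real.exp (t/2)) '' s) ((fun t => -Real.exp (t/2)) '' s) := by
    rw [Set.disjoint_left]
    rintro x ⟨t, _, rfl⟩ ⟨u, _, hu⟩
    have hu' : -Real.exp (u/2) = Real.exp (t/2) := hu
    have h1 := Real.exp_pos (t/2)
    have h2 := Real.exp_pos (u/2)
    linarith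
  have hmeas2 : MeasurableSet ((fun t => -Real.exp (t/2)) '' s) := by
    have : Continuous fun t : ℝ => -Real.exp (t/2) := by continuity
    exact (this.measurableEmbedding hinj2).measurableSet_image' hs
  rw [lintegral_union hmeas2 hdisj]
  rw [my_lintegral_image hs (fun x _ => (hderiv x).hasDerivWithinAt) hinj.injOn _,
    my_lintegral_image (f := fun t => -Real.exp (t/2)) (f' := fun t => -(Real.exp (t/2) * (1/2)))
      hs (fun x _ => ((hderiv x).neg).hasDerivWithinAt) hinj2.injOn _]
  rw [← lintegral_add_left]
  · refine setLIntegral_congr_fun hs (fun t _ => ?_)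
    have hσ2 : (0:ℝ) < (σ:ℝ)^2 := by positivity
    have hL : Real.log ((σ:ℝ)^2) = 2 * Real.log σ := by
      rw [Real.log_pow]; push_cast; ring
    have hexpL : Real.exp (Real.log ((σ:ℝ)^2)) = (σ:ℝ)^2 := Real.exp_log hσ2
    have hsq : Real.exp (t/2) ^ 2 = Real.exp t := by rw [sq, ← Real.exp_add]; ring_nf
    have hcoe : ((σ^2 : ℝ≥0) : ℝ) = (σ:ℝ)^2 := by push_cast; ring
    have hsqrt : Real.sqrt (2 * π * ((σ^2 : ℝ≥0) : ℝ)) = Real.sqrt (2 * π) * σ := by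
      rw [hcoe, show 2 * π * (σ:ℝ)^2 = (2 * π) * (σ:ℝ)^2 by ring, Real.sqrt_mul (by positivity),
        Real.sqrt_sq hσ0.le]
    have hrw : ((t - Real.log ((σ:ℝ)^2)) - Real.exp (t - Real.log ((σ:ℝ)^2))) / 2
        = t/2 - Real.log σ - Real.exp (t - Real.log ((σ:ℝ)^2)) / 2 := by
      rw [hL]; ring
    have hE : Real.exp (t - Real.log ((σ:ℝ)^2)) = Real.exp t / (σ:ℝ)^2 := by
      rw [Real.exp_sub, hexpL]
    have hsπ : (0:ℝ) < Real.sqrt (2 * π) := Real.sqrt_pos.mpr (by positivity)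
    have key : Real.exp (t/2) * (1/2) * gaussianPDFReal 0 (σ^2) (Real.exp (t/2))
        + Real.exp (t/2) * (1/2) * gaussianPDFReal 0 (σ^2) (-Real.exp (t/2))
        = 1 / Real.sqrt (2 * π) *
          Real.exp (((t - Real.log ((σ:ℝ)^2)) - Real.exp (t - Real.log ((σ:ℝ)^2))) / 2) := by
      simp only [gaussianPDFReal, sub_zero, neg_sq]
      rw [hsqrt, hcoe, hsq, hrw, Real.exp_sub, Real.exp_sub, Real.exp_log hσ0, hE]
      rw [show -Real.exp t / (2 * (σ:ℝ)^2) = -(Real.exp t / (σ:ℝ)^2 / 2) by ring, Real.exp_neg]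
      have h1 : (0:ℝ) < Real.exp (Real.exp t / (σ:ℝ)^2 / 2) := Real.exp_pos _
      field_simp
      ring
    have habs1 : |Real.exp (t/2) * (1/2)| = Real.exp (t/2) * (1/2) := abs_of_pos (by positivity)
    have habs2 : |(-(Real.exp (t/2) * (1/2)))| = Real.exp (t/2) * (1/2) := by
      rw [abs_neg]; exact habs1
    rw [habs1, habs2, gaussianPDF_def,
      ← ENNReal.ofReal_mul (by positivity), ← ENNReal.ofReal_mul (by positivity),
      ← ENNReal.ofReal_add (mul_nonneg (by positivity) (gaussianPDFReal_nonneg 0 _ _))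
        (mul_nonneg (by positivity) (gaussianPDFReal_nonneg 0 _ _)), key]
  · exact ((measurable_abs.comp ((Real.measurable_exp.comp (measurable_id.div_const 2)).mul
      measurable_const)).ennreal_ofReal).mul
      ((measurable_gaussianPDF 0 (σ^2)).comp (Real.measurable_exp.comp (measurable_id.div_const 2)))


/-- If `r` has law `N(0, σ²)` with `σ > 0`, then `log r²` has density
`t ↦ f(t − log σ²)` with respect to Lebesgue measure, where
`f(t) = (1/√(2π)) · exp((t − eᵗ)/2)` is the log-χ²₁ density. -/
theorem logChiSq_density_of_gaussian_scaled
    {Ω : Type*} [MeasurableSpace Ω] (P : Measure Ω) [IsProbabilityMeasure P]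
    (σ : ℝ≥0) (hσ : 0 < σ) (r : Ω → ℝ) (hr : Measurable r)
    (hlaw : P.map r = gaussianReal 0 (σ ^ 2)) :
    P.map (fun ω => Real.log ((r ω) ^ 2)) =
      volume.withDensity
        (fun t => ENNReal.ofReal
          ((1 / Real.sqrt (2 * Real.pi)) *
            Real.exp (((t - Real.log ((σ : ℝ) ^ 2))
              - Real.exp (t - Real.log ((σ : ℝ) ^ 2))) / 2))) := by
  have hφ : Measurable fun x : ℝ => Real.log (x ^ 2) :=
    Real.measurable_log.comp (measurable_id.pow_const 2)
  have h1 : P.map (fun ω => Real.log ((r ω) ^ 2))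
      = (P.map r).map (fun x : ℝ => Real.log (x ^ 2)) :=
    (Measure.map_map hφ hr).symm
  rw [h1, hlaw, gaussian_map_log_sq σ hσ]
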